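/- Let F = ⟨A, R, W, S⟩ be a semiring-based weighted argumentation framework over an absorptive c-semiring S, let Z ⊆ A be a w-admissible extension of F, and let B = A \ (Z ∪ R⁺(Z)). If T ⊆ B is a w-complete extension of the restricted framework F|_B and every argument of T is w-defended by Z ∪ T in F, then Z ∪ T is a w-complete extension of F. -/
import Mathlib


open Finset

variable {A : Type*} [Fintype A] [DecidableEq A] {S : Type*} [CommSemiring S]

/-- The order induced by the idempotent addition of a c-semiring: `a ≤ₛ b` iff `a + b = b`. -/
def sLE (a b : S) : Prop := a + b = b

/-- The attack weight `W(B, D)` from a set of arguments `B` to a set `D`: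
the semiring product of all pairwise weights. -/
def Wsets (W : A → A → S) (B D : Finset A) : S := ∏ b ∈ B, ∏ d ∈ D, W b d

/-- `B` is w-conflict-free iff `W(B, B) = ⊤` (here `⊤` is the multiplicative unit `1`). -/
def wConflictFree (W : A → A → S) (B : Finset A) : Prop := Wsets W B B = 1

/-- Within the framework whose set of arguments is `U`, the set `B` w-defends `b`:
for every attacker `a ∈ U` of `b` (i.e. `W a b ≠ ⊤`), `W(a, B ∪ {b}) ≥ₛ W(B, a)`. -/
def wDefendsIn (W : A → A → S) (U B : Finset A) (b : A) : Prop :=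
  ∀ a ∈ U, W a b ≠ 1 → sLE (Wsets W B {a}) (Wsets W {a} (insert b B))

/-- `B` is w-admissible in the framework with argument set `U`:
`B ⊆ U`, `B` is w-conflict-free, and `B` w-defends each of its members. -/
def wAdmissibleIn (W : A → A → S) (U B : Finset A) : Prop :=
  B ⊆ U ∧ wConflictFree W B ∧ ∀ b ∈ B, wDefendsIn W U B b

/-- `B` is a w-stable extension: w-admissible and every argument of `U` outside `B`
is attacked by some member of `B`. -/
def wStableIn (W : A → A → S) (U B : Finset A) : Prop :=
  wAdmissibleIn W U B ∧ ∀ a ∈ U, a ∉ B → ∃ b ∈ B, W b a ≠ 1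

/-- `B` is a w-complete extension: w-admissible and it contains every argument `b`
such that `B ∪ {b}` is w-admissible. -/
def wCompleteIn (W : A → A → S) (U B : Finset A) : Prop :=
  wAdmissibleIn W U B ∧ ∀ b ∈ U, wAdmissibleIn W U (insert b B) → b ∈ B

/-- `B` is a w-preferred extension: a ⊆-maximal w-admissible subset. -/
def wPreferredIn (W : A → A → S) (U B : Finset A) : Prop :=
  wAdmissibleIn W U B ∧ ∀ C : Finset A, wAdmissibleIn W U C → B ⊆ C → C = B


section Aux
variable {A : Type*} [DecidableEq A] {S : Type*} [CommSemiring S]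

lemma sLE_trans {x y z : S} (hxy : sLE x y) (hyz : sLE y z) : sLE x z := by
  unfold sLE at *; rw [← hyz, ← add_assoc, hxy]

lemma mul_sLE_left (habs : ∀ s t : S, s + s * t = s) (x y : S) : sLE (x * y) x := by
  unfold sLE; rw [add_comm]; exact habs x y

lemma sLE_one (habs : ∀ s t : S, s + s * t = s) (x : S) : sLE x 1 := by
  unfold sLE
  have := habs 1 x
  rw [one_mul] at this
  rw [add_comm]; exact this

lemma eq_one_of_mul_eq_one (habs : ∀ s t : S, s + s * t = s) {x y : S}
    (h : x * y = 1) : x = 1 := by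
  have h1 : x + 1 = x := by rw [← h]; exact habs x y
  have h2 : x + 1 = 1 := sLE_one habs x
  rw [← h1, h2]

lemma factor_eq_one (habs : ∀ s t : S, s + s * t = s) {W : A → A → S} {C : Finset A}
    (hC : wConflictFree W C) {x y : A} (hx : x ∈ C) (hy : y ∈ C) : W x y = 1 := by
  have hd : W x y ∣ Wsets W C C :=
    dvd_trans (Finset.dvd_prod_of_mem _ hy) (Finset.dvd_prod_of_mem _ hx)
  obtain ⟨k, hk⟩ := hd
  refine eq_one_of_mul_eq_one habs (y := k) ?_
  rw [← hk]; exact hC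

lemma Wsets_union_left {W : A → A → S} {B D E : Finset A} (h : Disjoint B D) :
    Wsets W (B ∪ D) E = Wsets W B E * Wsets W D E := Finset.prod_union h

lemma Wsets_union_right {W : A → A → S} {E B D : Finset A} (h : Disjoint B D) :
    Wsets W E (B ∪ D) = Wsets W E B * Wsets W E D := by
  unfold Wsets
  rw [← Finset.prod_mul_distrib]
  exact Finset.prod_congr rfl fun _ _ => Finset.prod_union h

lemma Wsets_singleton_left {W : A → A → S} {x : A} {D : Finset A} :
    Wsets W {x} D = ∏ d ∈ D, W x d := by simp [Wsets]

lemma Wsets_singleton_right {W : A → A → S} {D : Finset A} {x : A} :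
    Wsets W D {x} = ∏ d ∈ D, W d x := by simp [Wsets]

end Aux

/-- Division/union theorem: if Z is w-admissible in F, B = A \ (Z ∪ R⁺(Z)) is the
remaining sub-framework's argument set, T ⊆ B is a w-complete extension of F|_B, and
every argument of T is w-defended by Z ∪ T in F, then Z ∪ T is a w-complete extension
of F.  (Here a ∈ B iff a ∉ Z and no member of Z attacks a, i.e. W(i,a) = ⊤ for
all i ∈ Z.) -/
theorem union_complete (W : A → A → S)
    (hadd : ∀ s : S, s + s = s) (habs : ∀ s t : S, s + s * t = s)
    (Z : Finset A) (hZ : wAdmissibleIn W Finset.univ Z)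
    (B : Finset A) (hB : ∀ a : A, a ∈ B ↔ a ∉ Z ∧ ∀ i ∈ Z, W i a = 1)
    (T : Finset A) (hT : T ⊆ B)
    (hTB : wCompleteIn W B T)
    (hdef : ∀ t ∈ T, wDefendsIn W Finset.univ (Z ∪ T) t) :
    wCompleteIn W Finset.univ (Z ∪ T) := by
  obtain ⟨-, hZcf, hZdef⟩ := hZ
  obtain ⟨⟨hTsub, hTcf, hTdef⟩, hTcomp⟩ := hTB
  have hdisj : Disjoint Z T := by
    rw [Finset.disjoint_left]
    intro a haZ haT
    exact ((hB a).1 (hT haT)).1 haZ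
  have hZT1 : ∀ i ∈ Z, ∀ t ∈ T, W i t = 1 := fun i hi t ht => ((hB t).1 (hT ht)).2 i hi
  have hTZ1 : ∀ t ∈ T, Wsets W {t} Z = 1 := by
    intro t ht
    by_cases h : ∃ z ∈ Z, W t z ≠ 1
    · obtain ⟨z, hz, hzne⟩ := h
      have hdz := hZdef z hz t (Finset.mem_univ t) hzne
      have h1 : Wsets W Z {t} = 1 := by
        rw [Wsets_singleton_right]
        exact Finset.prod_eq_one fun i hi => hZT1 i hi t ht
      rw [h1, Finset.insert_eq_self.mpr hz] at hdz
      have h2 := sLE_one habs (Wsets W {t} Z)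
      unfold sLE at hdz h2
      rw [← hdz, add_comm]
      exact h2
    · push_neg at h
      rw [Wsets_singleton_left]
      exact Finset.prod_eq_one h
  have hcf : wConflictFree W (Z ∪ T) := by
    unfold wConflictFree
    have hZT : Wsets W Z T = 1 :=
      Finset.prod_eq_one fun i hi => Finset.prod_eq_one fun t ht => hZT1 i hi t ht
    have hTZ : Wsets W T Z = 1 := by
      unfold Wsets
      refine Finset.prod_eq_one fun t ht => ?_
      have := hTZ1 t ht
      rwa [Wsets_singleton_left] at this
    rw [Wsets_union_left hdisj, Wsets_union_right hdisj, Wsets_union_right hdisj,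
      hZcf, hTcf, hZT, hTZ, one_mul, one_mul]
  have hdefall : ∀ b ∈ Z ∪ T, wDefendsIn W Finset.univ (Z ∪ T) b := by
    intro b hb
    rcases Finset.mem_union.mp hb with hbZ | hbT
    · intro a _ hab
      rw [Finset.insert_eq_self.mpr (Finset.mem_union_left T hbZ)]
      by_cases hex : ∃ t ∈ T, W a t ≠ 1
      · obtain ⟨t, ht, hat⟩ := hex
        have := hdef t ht a (Finset.mem_univ a) hat
        rwa [Finset.insert_eq_self.mpr (Finset.mem_union_right Z ht)] at this
      · push_neg at hex
        have haT : Wsets W {a} T = 1 := by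
          rw [Wsets_singleton_left]; exact Finset.prod_eq_one hex
        have hzd := hZdef b hbZ a (Finset.mem_univ a) hab
        rw [Finset.insert_eq_self.mpr hbZ] at hzd
        have hL : Wsets W (Z ∪ T) {a} = Wsets W Z {a} * Wsets W T {a} :=
          Wsets_union_left hdisj
        have hR : Wsets W {a} (Z ∪ T) = Wsets W {a} Z := by
          rw [Wsets_union_right hdisj, haT, mul_one]
        rw [hL, hR]
        exact sLE_trans (mul_sLE_left habs _ _) hzd
    · exact hdef b hbT
  refine ⟨⟨Finset.subset_univ _, hcf, hdefall⟩, fun b _ hbadm => ?_⟩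
  by_contra hbnot
  obtain ⟨-, hCcf, hCdef⟩ := hbadm
  have hbB : b ∈ B := by
    rw [hB]
    refine ⟨fun hbZ => hbnot (Finset.mem_union_left T hbZ), fun i hi => ?_⟩
    exact factor_eq_one habs hCcf
      (Finset.mem_insert_of_mem (Finset.mem_union_left T hi)) (Finset.mem_insert_self b _)
  have hsub : insert b T ⊆ insert b (Z ∪ T) :=
    Finset.insert_subset_insert b Finset.subset_union_right
  have hdisj2 : Disjoint Z (insert b T) := by
    rw [Finset.disjoint_left]
    intro i hiZ hiins
    rcases Finset.mem_insert.mp hiins with rfl | hiT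
    · exact ((hB i).1 hbB).1 hiZ
    · exact (Finset.disjoint_left.mp hdisj) hiZ hiT
  have hCeq : insert b (Z ∪ T) = Z ∪ insert b T := (Finset.union_insert b Z T).symm
  have hadmB : wAdmissibleIn W B (insert b T) := by
    refine ⟨Finset.insert_subset hbB hT, ?_, ?_⟩
    · refine Finset.prod_eq_one fun x hx => Finset.prod_eq_one fun y hy => ?_
      exact factor_eq_one habs hCcf (hsub hx) (hsub hy)
    · intro x hx a haB hax
      have hxC : x ∈ insert b (Z ∪ T) := hsub hx
      have hd := hCdef x hxC a (Finset.mem_univ a) hax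
      rw [Finset.insert_eq_self.mpr hxC] at hd
      have hZa : Wsets W Z {a} = 1 := by
        rw [Wsets_singleton_right]
        exact Finset.prod_eq_one fun i hi => ((hB a).1 haB).2 i hi
      have hL : Wsets W (insert b (Z ∪ T)) {a} = Wsets W (insert b T) {a} := by
        rw [hCeq, Wsets_union_left hdisj2, hZa, one_mul]
      have hR : sLE (Wsets W {a} (insert b (Z ∪ T))) (Wsets W {a} (insert b T)) := by
        rw [hCeq, Wsets_union_right hdisj2, mul_comm]
        exact mul_sLE_left habs _ _
      rw [Finset.insert_eq_self.mpr hx, ← hL]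
      exact sLE_trans hd hR
  exact hbnot (Finset.mem_union_right Z (hTcomp b hbB hadmB))
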